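/- arXiv:2511.03082 — 7 statements merged into one kernel-verified Lean document; each statement's English description precedes it below -/
import Mathlib

section
/- For all natural numbers n ≥ 1 and 0 < k < n-1, the Pascalian numbers satisfy B(n,k) = B(n-1,k-1) + B(n-1,k+1), where B(n,k) = C(n, ⌊(n-k)/2⌋). -/
def B (n k : ℕ) : ℕ := Nat.choose n ((n - k) / 2)

theorem pascalian_recursion (n k : ℕ) (hn : 1 ≤ n) (hk0 : 0 < k) (hk : k < n - 1) :
    B n k = B (n - 1) (k - 1) + B (n - 1) (k + 1) := by
  unfold B
  have h1 : n - 1 - (k - 1) = n - k := by omega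
  have h2 : n - 1 - (k + 1) = n - k - 2 := by omega
  have h3 : (n - k - 2) / 2 = (n - k) / 2 - 1 := by omega
  rw [h1, h2, h3]
  have h4 : 1 ≤ (n - k) / 2 := by omega
  obtain ⟨s, hs⟩ : ∃ s, (n - k) / 2 = s + 1 := ⟨_, (Nat.succ_pred_eq_of_pos h4).symm⟩
  rw [hs]
  have hn' : n = (n - 1) + 1 := by omega
  rw [hn', Nat.choose_succ_succ]
  simp [Nat.add_comm]
end

section
/- For all natural numbers n, the sum over k from 0 to n of B(n,k)^2 equals C(2n, n), where B(n,k) = C(n, ⌊(n-k)/2⌋). -/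
lemma sum_sq_choose (n : ℕ) :
    ∑ m ∈ Finset.range (n + 1), (n.choose m) ^ 2 = Nat.choose (2 * n) n := by
  rw [two_mul, Nat.add_choose_eq, Finset.Nat.sum_antidiagonal_eq_sum_range_succ_mk]
  refine Finset.sum_congr rfl fun m hm => ?_
  rw [Finset.mem_range] at hm
  rw [← Nat.choose_symm (by omega : m ≤ n), sq]

theorem pascalian_sum_of_squares (n : ℕ) :
    ∑ k ∈ Finset.range (n + 1), (B n k) ^ 2 = Nat.choose (2 * n) n := by
  rw [← Finset.sum_range_reflect, ← sum_sq_choose n]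
  have h1 : ∀ j ∈ Finset.range (n + 1), (B n (n + 1 - 1 - j)) ^ 2 = (n.choose (j / 2)) ^ 2 := by
    intro j hj
    rw [Finset.mem_range] at hj
    have : n + 1 - 1 - j = n - j := by omega
    rw [this]
    unfold B
    rw [Nat.sub_sub_self (by omega)]
  rw [Finset.sum_congr rfl h1]
  refine Finset.sum_nbij' (fun j => if Even j then j / 2 else n - j / 2)
    (fun m => if 2 * m ≤ n then 2 * m else 2 * (n - m) + 1) ?_ ?_ ?_ ?_ ?_
  · intro j hj
    rw [Finset.mem_range] at hj ⊢
    split_ifs <;> omega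
  · intro m hm
    rw [Finset.mem_range] at hm ⊢
    split_ifs <;> omega
  · intro j hj
    rw [Finset.mem_range] at hj
    split_ifs with h1 h2 h2 <;> simp only [Nat.even_iff] at h1 <;> omega
  · intro m hm
    rw [Finset.mem_range] at hm
    split_ifs with h1 h2 h2 <;> simp only [Nat.even_iff] at h2 <;> omega
  · intro j hj
    rw [Finset.mem_range] at hj
    split_ifs with h
    · rfl
    · rw [Nat.choose_symm (by omega : j / 2 ≤ n)]
end

section
/- For every natural number n ≥ 1 and every polynomial ring over a commutative ring, the Pascalian polynomial satisfies P_n(x) = (1 + x^2)·P_{n-1}(x) + B(n-1,0)·(1 - x)·x^n, where P_n(x) = Σ_{k=0}^{n} B(n,k)·x^{n-k} and B(n,k) = C(n, ⌊(n-k)/2⌋). -/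
open Polynomial

noncomputable def P (R : Type*) [CommRing R] (n : ℕ) : Polynomial R :=
  ∑ k ∈ Finset.range (n + 1), C ((B n k : R)) * X ^ (n - k)

noncomputable def Q (R : Type*) [CommRing R] (n : ℕ) : Polynomial R :=
  ∑ j ∈ Finset.range (n + 1), C ((Nat.choose n (j / 2) : R)) * X ^ j

lemma P_eq_Q (R : Type*) [CommRing R] (n : ℕ) : P R n = Q R n := by
  rw [Q, ← Finset.sum_range_reflect]
  unfold P B
  simp

lemma choose_half (m : ℕ) : m.choose ((m + 1) / 2) = m.choose (m / 2) := by
  rcases Nat.even_or_odd m with ⟨t, ht⟩ | ⟨t, ht⟩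
  · congr 1; omega
  · have h1 : (m + 1) / 2 = t + 1 := by omega
    have h2 : m / 2 = t := by omega
    rw [h1, h2]
    have := Nat.choose_symm (n := m) (k := t) (by omega)
    have h3 : m - t = t + 1 := by omega
    rw [h3] at this
    exact this

lemma key (R : Type*) [CommRing R] (m : ℕ) :
    Q R (m + 1) = (1 + X ^ 2) * Q R m + C ((m.choose (m / 2) : R)) * (1 - X) * X ^ (m + 1) := by
  have hsplit : ∀ j ∈ Finset.range (m + 2),
      (C (((m + 1).choose (j / 2) : R)) * X ^ j)
      = C ((m.choose (j / 2) : R)) * X ^ j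
        + (if 2 ≤ j then C ((m.choose ((j - 2) / 2) : R)) * X ^ j else 0) := by
    intro j _
    by_cases hj : 2 ≤ j
    · rw [if_pos hj]
      have h2 : j / 2 = (j - 2) / 2 + 1 := by omega
      have h : (m + 1).choose (j / 2) = m.choose (j / 2) + m.choose ((j - 2) / 2) := by
        rw [h2, Nat.choose_succ_succ']
        omega
      rw [h, Nat.cast_add, map_add]; ring
    · rw [if_neg hj]
      have h : j / 2 = 0 := by omega
      rw [h]; simp
  have hS1 : ∑ j ∈ Finset.range (m + 2), C ((m.choose (j / 2) : R)) * X ^ j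
      = Q R m + C ((m.choose ((m + 1) / 2) : R)) * X ^ (m + 1) := by
    rw [Finset.sum_range_succ, Q]
  have hS2 : ∑ j ∈ Finset.range (m + 2),
      (if 2 ≤ j then C ((m.choose ((j - 2) / 2) : R)) * X ^ j else 0)
      = X ^ 2 * (Q R m - C ((m.choose (m / 2) : R)) * X ^ m) := by
    rw [Finset.sum_range_succ', Finset.sum_range_succ']
    have e2 : ∀ i ∈ Finset.range m,
        (if 2 ≤ i + 1 + 1 then C ((m.choose ((i + 1 + 1 - 2) / 2) : R)) * X ^ (i + 1 + 1) else 0)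
        = X ^ 2 * (C ((m.choose (i / 2) : R)) * X ^ i) := by
      intro i _
      rw [if_pos (by omega)]
      have h : i + 1 + 1 - 2 = i := by omega
      rw [h]; ring
    rw [Finset.sum_congr rfl e2, ← Finset.mul_sum]
    have hQm : ∑ i ∈ Finset.range m, C ((m.choose (i / 2) : R)) * X ^ i
        = Q R m - C ((m.choose (m / 2) : R)) * X ^ m := by
      rw [Q, Finset.sum_range_succ]; ring
    rw [hQm]
    norm_num
  rw [Q, Finset.sum_congr rfl hsplit, Finset.sum_add_distrib, hS1, hS2, choose_half]
  ring

theorem pascalian_poly_recursion (R : Type*) [CommRing R] (n : ℕ) (hn : 1 ≤ n) :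
    P R n = (1 + X ^ 2) * P R (n - 1) + C ((B (n - 1) 0 : R)) * (1 - X) * X ^ n := by
  obtain ⟨m, rfl⟩ : ∃ m, n = m + 1 := ⟨n - 1, by omega⟩
  simp only [Nat.add_sub_cancel]
  rw [P_eq_Q, P_eq_Q]
  have hB : B m 0 = m.choose (m / 2) := rfl
  rw [hB, key]
end

section
/- For every complex number z with P_n(z) = 0 and z ≠ -1, we have |z| < 1, where P_n(z) = Σ_{k=0}^n B(n,k)·z^{n-k} and B(n,k) = C(n, ⌊(n-k)/2⌋) and n ≥ 1. -/
noncomputable def Pc (n : ℕ) (z : ℂ) : ℂ :=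
  ∑ k ∈ Finset.range (n + 1), (B n k : ℂ) * z ^ (n - k)

/-- shifted coefficient function: `hh n 0 = 0`, `hh n (j+1) = C(n, j/2)`. -/
def hh (n j : ℕ) : ℕ := if j = 0 then 0 else Nat.choose n ((j - 1) / 2)

lemma hh_succ (n j : ℕ) : hh n (j + 1) = Nat.choose n (j / 2) := by
  simp [hh]

lemma hh_mono (n : ℕ) {j : ℕ} (hj : j ≤ n) : hh n j ≤ hh n (j + 1) := by
  rcases Nat.eq_zero_or_pos j with rfl | hj0
  · simp [hh]
  · rw [hh_succ, hh, if_neg (by omega)]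
    rcases Nat.even_or_odd j with he | ho
    · rw [Nat.even_iff] at he
      have h1 : (j - 1) / 2 + 1 = j / 2 := by omega
      rw [← h1]
      exact Nat.choose_le_succ_of_lt_half_left (by omega)
    · rw [Nat.odd_iff] at ho
      have h1 : (j - 1) / 2 = j / 2 := by omega
      rw [h1]

lemma Pc_eq (n : ℕ) (z : ℂ) :
    Pc n z = ∑ j ∈ Finset.range (n + 1), (hh n (j + 1) : ℂ) * z ^ j := by
  rw [← Finset.sum_range_reflect (fun j => (hh n (j + 1) : ℂ) * z ^ j) (n + 1), Pc]
  apply Finset.sum_congr rfl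
  intro k hk
  rw [Finset.mem_range, Nat.lt_succ_iff] at hk
  have h1 : n + 1 - 1 - k = n - k := by omega
  rw [h1, hh_succ, B]

lemma key_s13 (n : ℕ) (z : ℂ) :
    (1 - z) * Pc n z =
      (∑ j ∈ Finset.range (n + 1), ((hh n (j + 1) : ℂ) - (hh n j : ℂ)) * z ^ j)
        - (Nat.choose n (n / 2) : ℂ) * z ^ (n + 1) := by
  have hT1 : ∑ j ∈ Finset.range (n + 2), (hh n j : ℂ) * z ^ j =
      z * ∑ j ∈ Finset.range (n + 1), (hh n (j + 1) : ℂ) * z ^ j := by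
    rw [Finset.sum_range_succ', Finset.mul_sum]
    simp [hh, pow_succ]
    ring_nf
    apply Finset.sum_congr rfl
    intro j _
    ring
  have hT2 : ∑ j ∈ Finset.range (n + 2), (hh n j : ℂ) * z ^ j =
      (∑ j ∈ Finset.range (n + 1), (hh n j : ℂ) * z ^ j)
        + (Nat.choose n (n / 2) : ℂ) * z ^ (n + 1) := by
    rw [Finset.sum_range_succ, hh_succ]
  rw [Pc_eq, sub_mul, one_mul, ← hT1, hT2]
  simp only [sub_mul]
  rw [Finset.sum_sub_distrib]
  ring

lemma eq_one_of_re_eq_one {w : ℂ} (h1 : ‖w‖ = 1) (h2 : w.re = 1) : w = 1 := by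
  have h3 : Complex.normSq w = 1 := by
    rw [Complex.normSq_eq_norm_sq, h1]; norm_num
  rw [Complex.normSq_apply, h2] at h3
  have him : w.im = 0 := by nlinarith
  apply Complex.ext <;> simp [h2, him]

theorem pascalian_roots_upper_bound (n : ℕ) (hn : 1 ≤ n) (z : ℂ)
    (hz : Pc n z = 0) (hz' : z ≠ -1) : ‖z‖ < 1 := by
  by_contra hcon
  push_neg at hcon
  -- hcon : 1 ≤ Complex.abs z
  rcases eq_or_lt_of_le hn with h1 | hn2
  · -- n = 1
    apply hz'
    rw [← h1] at hz
    have : z + 1 = 0 := by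
      have hP : Pc 1 z = z + 1 := by
        simp [Pc, Finset.sum_range_succ, B]
      rw [hP] at hz; exact hz
    linear_combination this
  -- now n ≥ 2
  set r : ℝ := ‖z‖ with hrdef
  have hr1 : (1:ℝ) ≤ r := hcon
  have hr0 : (0:ℝ) < r := by linarith
  set c : ℝ := (Nat.choose n (n / 2) : ℝ) with hcdef
  have hc0 : (0:ℝ) < c := by
    have := Nat.choose_pos (Nat.div_le_self n 2)
    rw [hcdef]
    exact_mod_cast this
  -- the basic equation
  have heq : (Nat.choose n (n / 2) : ℂ) * z ^ (n + 1) =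
      ∑ j ∈ Finset.range (n + 1), ((hh n (j + 1) : ℂ) - (hh n j : ℂ)) * z ^ j := by
    have hk := key_s13 n z
    rw [hz, mul_zero] at hk
    linear_combination hk
  -- real coefficients
  set E : ℕ → ℝ := fun j => (hh n (j + 1) : ℝ) - (hh n j : ℝ) with hEdef
  have hEnonneg : ∀ j ∈ Finset.range (n + 1), 0 ≤ E j := by
    intro j hj
    rw [Finset.mem_range, Nat.lt_succ_iff] at hj
    have := hh_mono n hj
    simp only [hEdef, sub_nonneg]
    exact_mod_cast this
  have hsumE : ∑ j ∈ Finset.range (n + 1), E j = c := by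
    rw [hEdef, Finset.sum_range_sub (fun j => (hh n j : ℝ))]
    simp [hh, hcdef]
  have hcast : ∀ j, ((hh n (j + 1) : ℂ) - (hh n j : ℂ)) = ((E j : ℝ) : ℂ) := by
    intro j; simp [hEdef]
  -- first: r = 1
  have hchain : c * r ^ (n + 1) ≤ c * r ^ n := by
    have h0 : c * r ^ (n + 1) = ‖(Nat.choose n (n / 2) : ℂ) * z ^ (n + 1)‖ := by
      rw [norm_mul, norm_pow]
      simp [Complex.norm_natCast, hcdef, hrdef]
    rw [h0, heq]
    calc ‖∑ j ∈ Finset.range (n + 1), ((hh n (j + 1) : ℂ) - (hh n j : ℂ)) * z ^ j‖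
        ≤ ∑ j ∈ Finset.range (n + 1),
            ‖((hh n (j + 1) : ℂ) - (hh n j : ℂ)) * z ^ j‖ :=
          norm_sum_le _ _
      _ ≤ ∑ j ∈ Finset.range (n + 1), E j * r ^ n := by
          apply Finset.sum_le_sum
          intro j hj
          rw [Finset.mem_range, Nat.lt_succ_iff] at hj
          rw [hcast, norm_mul, norm_pow, Complex.norm_real, Real.norm_eq_abs,
            abs_of_nonneg (hEnonneg j (Finset.mem_range.mpr (Nat.lt_succ_of_le hj)))]
          apply mul_le_mul_of_nonneg_left _ (hEnonneg j (Finset.mem_range.mpr (Nat.lt_succ_of_le hj)))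
          exact pow_le_pow_right₀ hr1 hj
      _ = c * r ^ n := by rw [← Finset.sum_mul, hsumE]
  have hrn : (0:ℝ) < r ^ n := pow_pos hr0 n
  have hrle : r ≤ 1 := by
    rw [pow_succ, ← mul_assoc] at hchain
    nlinarith [mul_pos hc0 hrn]
  have hr : r = 1 := le_antisymm hrle hr1
  -- equality case analysis
  have hzc : z * (starRingEnd ℂ) z = 1 := by
    rw [Complex.mul_conj]
    rw [Complex.normSq_eq_norm_sq, ← hrdef, hr]
    norm_num
  have hpow : z ^ (n + 1) * ((starRingEnd ℂ) z) ^ (n + 1) = 1 := by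
    rw [← mul_pow, hzc, one_pow]
  set w : ℕ → ℂ := fun j => z ^ j * ((starRingEnd ℂ) z) ^ (n + 1) with hwdef
  have habsw : ∀ j, ‖w j‖ = 1 := by
    intro j
    rw [hwdef]
    simp only [norm_mul, norm_pow, Complex.norm_conj, ← hrdef, hr]
    simp
  have heq2 : (c : ℂ) = ∑ j ∈ Finset.range (n + 1), ((E j : ℝ) : ℂ) * w j := by
    have h := congrArg (· * ((starRingEnd ℂ) z) ^ (n + 1)) heq
    rw [mul_assoc, hpow, mul_one, Finset.sum_mul] at h
    rw [hcdef]
    push_cast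
    rw [h]
    apply Finset.sum_congr rfl
    intro j _
    rw [hcast, hwdef]
    ring
  have heqre : c = ∑ j ∈ Finset.range (n + 1), E j * (w j).re := by
    have := congrArg Complex.re heq2
    rw [Complex.ofReal_re, Complex.re_sum] at this
    rw [this]
    apply Finset.sum_congr rfl
    intro j _
    rw [Complex.re_ofReal_mul]
  have hre_le : ∀ j, (w j).re ≤ 1 := by
    intro j
    calc (w j).re ≤ ‖w j‖ := Complex.re_le_norm _
      _ = 1 := habsw j
  have hzero : ∑ j ∈ Finset.range (n + 1), E j * (1 - (w j).re) = 0 := by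
    have : ∑ j ∈ Finset.range (n + 1), E j * (1 - (w j).re)
        = (∑ j ∈ Finset.range (n + 1), E j) - ∑ j ∈ Finset.range (n + 1), E j * (w j).re := by
      rw [← Finset.sum_sub_distrib]
      apply Finset.sum_congr rfl
      intro j _; ring
    rw [this, hsumE, ← heqre, sub_self]
  have hterm : ∀ j ∈ Finset.range (n + 1), E j * (1 - (w j).re) = 0 := by
    rw [← Finset.sum_eq_zero_iff_of_nonneg]
    · exact hzero
    · intro j hj
      have := hre_le j
      have := hEnonneg j hj
      nlinarith
  have hw_eq_one : ∀ j ∈ Finset.range (n + 1), 0 < E j → w j = 1 := by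
    intro j hj hEj
    have h := hterm j hj
    have hre : (w j).re = 1 := by
      rcases mul_eq_zero.mp h with h' | h'
      · exact absurd h' (ne_of_gt hEj)
      · linarith
    exact eq_one_of_re_eq_one (habsw j) hre
  -- j = 0
  have hE0 : E 0 = 1 := by simp [hEdef, hh]
  have hw0 : w 0 = 1 := hw_eq_one 0 (by simp) (by rw [hE0]; norm_num)
  -- j = 2
  have h2mem : 2 ∈ Finset.range (n + 1) := Finset.mem_range.mpr (by omega)
  have hE2 : E 2 = (n : ℝ) - 1 := by
    simp [hEdef, hh]
  have hw2 : w 2 = 1 := by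
    apply hw_eq_one 2 h2mem
    rw [hE2]
    have : (2:ℝ) ≤ (n:ℝ) := by exact_mod_cast hn2
    linarith
  have hz2 : z ^ 2 = 1 := by
    have : z ^ 2 * ((starRingEnd ℂ) z) ^ (n + 1) = 1 := hw2
    rw [hwdef] at hw0
    simp only [pow_zero, one_mul] at hw0
    rw [hw0, mul_one] at this
    exact this
  have : (z - 1) * (z + 1) = 0 := by linear_combination hz2
  rcases mul_eq_zero.mp this with h' | h'
  · -- z = 1
    have hz1 : z = 1 := by linear_combination h'
    rw [hz1] at hz
    have hPc1 : Pc n 1 = ((∑ k ∈ Finset.range (n + 1), B n k : ℕ) : ℂ) := by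
      rw [Pc]
      push_cast
      simp
    rw [hPc1] at hz
    have hpos : 0 < ∑ k ∈ Finset.range (n + 1), B n k := by
      apply Finset.sum_pos'
      · intro i _; exact Nat.zero_le _
      · exact ⟨n, Finset.mem_range.mpr (Nat.lt_succ_self n), by simp [B, Nat.choose_pos]⟩
    rw [Nat.cast_eq_zero] at hz
    omega
  · exact hz' (by linear_combination h')
end

section
/- For every even natural number n = 2m, P_n has no purely imaginary roots: for every real x, P_n(x·i) ≠ 0. -/
lemma sum_pair (f : ℕ → ℂ) (m : ℕ) :
    ∑ j ∈ Finset.range (2 * m), f j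
      = ∑ t ∈ Finset.range m, (f (2 * t) + f (2 * t + 1)) := by
  induction m with
  | zero => simp
  | succ m ih =>
    rw [show 2 * (m + 1) = (2 * m + 1) + 1 by ring, Finset.sum_range_succ,
      Finset.sum_range_succ, ih, Finset.sum_range_succ]
    ring

theorem pascalian_even_no_imaginary_root (n : ℕ) (hn : Even n) (x : ℝ) :
    Pc n (x * Complex.I) ≠ 0 := by
  obtain ⟨m, rfl⟩ : ∃ m, n = 2 * m := by
    obtain ⟨m, hm⟩ := hn; exact ⟨m, by omega⟩
  set z : ℂ := x * Complex.I with hzdef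
  have key : Pc (2*m) z = ∑ j ∈ Finset.range (2*m+1),
      ((Nat.choose (2*m) (j/2) : ℂ)) * z ^ j := by
    rw [Pc, ← Finset.sum_range_reflect (fun j => ((Nat.choose (2*m) (j/2) : ℂ)) * z ^ j) (2*m+1)]
    apply Finset.sum_congr rfl
    intro k hk
    simp only [Finset.mem_range] at hk
    have h1 : 2*m + 1 - 1 - k = 2*m - k := by omega
    rw [h1]
    rfl
  have c2 : z^2 = ((-(x^2) : ℝ) : ℂ) := by
    rw [hzdef]
    push_cast
    rw [mul_pow, Complex.I_sq]
    ring
  have hz : ∀ t, z ^ (2*t) = ((-(x^2):ℝ):ℂ)^t := fun t => by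
    rw [pow_mul, c2]
  set S : ℝ := ∑ t ∈ Finset.range m, (Nat.choose (2*m) t : ℝ) * (-(x^2))^t with hS
  set T : ℝ := (Nat.choose (2*m) m : ℝ) * (-(x^2))^m with hT
  have key2 : Pc (2*m) z = (S : ℂ) * (1 + z) + (T : ℂ) := by
    rw [key, Finset.sum_range_succ, sum_pair]
    have hm2 : (2*m)/2 = m := by omega
    rw [hm2]
    push_cast [hS, hT]
    rw [Finset.sum_mul]
    congr 1
    · apply Finset.sum_congr rfl
      intro t ht
      have h1 : (2*t)/2 = t := by omega
      have h2 : (2*t+1)/2 = t := by omega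
      rw [h1, h2, pow_succ, hz t]
      push_cast
      ring
    · rw [hz m]
      push_cast
      ring
  intro h0
  rw [key2] at h0
  have him := congrArg Complex.im h0
  have hre := congrArg Complex.re h0
  simp [hzdef] at him hre
  rcases eq_or_ne x 0 with hx | hx
  · subst hx
    have hS1 : S = ∑ t ∈ Finset.range m, (Nat.choose (2*m) t : ℝ) * 0^t := by
      rw [hS]; norm_num
    have hT1 : T = (Nat.choose (2*m) m : ℝ) * 0^m := by rw [hT]; norm_num
    rcases Nat.eq_zero_or_pos m with hm0 | hm0
    · subst hm0
      simp [hS1, hT1] at hS hT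
      simp [hS1, hT1] at hre
    · obtain ⟨k, rfl⟩ : ∃ k, m = k + 1 := ⟨m - 1, by omega⟩
      rw [hS1, hT1] at hre
      simp [Finset.sum_range_succ', pow_succ] at hre
  · have hS0 : S = 0 := by
      rcases him with h | h
      · exact h
      · exact absurd h hx
    rw [hS0] at hre
    simp at hre
    have : (Nat.choose (2*m) m : ℝ) * (-(x^2))^m ≠ 0 := by
      apply mul_ne_zero
      · exact_mod_cast (Nat.choose_pos (by omega)).ne'
      · exact pow_ne_zero _ (by simpa using pow_ne_zero 2 hx)
    exact this (by rw [← hT]; linarith [hre])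
end

section
/- For every natural number n ≡ 3 (mod 4), there exists a real number x ∈ (0,1) with q_n(-x^2) = 0, where q_n(x) = Σ_{k=0}^{⌊n/2⌋} C(n,k)·x^k; equivalently, P_n has a purely imaginary root. -/
noncomputable def qf (n : ℕ) (x : ℝ) : ℝ :=
  ∑ k ∈ Finset.range (n / 2 + 1), (Nat.choose n k : ℝ) * x ^ k

lemma alt_sum_choose (n : ℕ) (hn : 1 ≤ n) (m : ℕ) :
    ∑ k ∈ Finset.range (m + 1), (Nat.choose n k : ℝ) * (-1 : ℝ) ^ k
      = (-1 : ℝ) ^ m * (Nat.choose (n - 1) m : ℝ) := by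
  induction m with
  | zero => simp
  | succ m ih =>
    rw [Finset.sum_range_succ, ih]
    have hpascal : (Nat.choose (n - 1) m : ℝ) + (Nat.choose (n - 1) (m + 1) : ℝ)
        = (Nat.choose n (m + 1) : ℝ) := by
      have h : (n - 1).choose m + (n - 1).choose (m + 1) = n.choose (m + 1) := by
        have hm : n - 1 + 1 = n := Nat.succ_pred_eq_of_pos hn
        calc (n - 1).choose m + (n - 1).choose (m + 1)
            = (n - 1 + 1).choose (m + 1) := (Nat.choose_succ_succ _ _).symm
          _ = n.choose (m + 1) := by rw [hm]
      exact_mod_cast congrArg (Nat.cast : ℕ → ℝ) h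
    rw [← hpascal]
    ring
  
lemma qf_one_neg (n : ℕ) (hn : n % 4 = 3) : qf n (-1) < 0 := by
  obtain ⟨j, hj⟩ : ∃ j, n = 4 * j + 3 := ⟨n / 4, by omega⟩
  have hdiv : n / 2 = 2 * j + 1 := by omega
  have h1 : 1 ≤ n := by omega
  have := alt_sum_choose n h1 (2 * j + 1)
  have hodd : (-1 : ℝ) ^ (2 * j + 1) = -1 := by
    simp [pow_succ, pow_mul]
  unfold qf
  rw [hdiv]
  calc ∑ k ∈ Finset.range (2 * j + 1 + 1), (Nat.choose n k : ℝ) * (-1) ^ k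
      = (-1 : ℝ) ^ (2 * j + 1) * (Nat.choose (n - 1) (2 * j + 1) : ℝ) := this
    _ = -(Nat.choose (n - 1) (2 * j + 1) : ℝ) := by rw [hodd]; ring
    _ < 0 := by
        have : 0 < Nat.choose (n - 1) (2 * j + 1) := Nat.choose_pos (by omega)
        have : (0 : ℝ) < Nat.choose (n - 1) (2 * j + 1) := by exact_mod_cast this
        linarith

theorem pascalian_imaginary_root_three_mod_four (n : ℕ) (hn : n % 4 = 3) :
    ∃ x : ℝ, 0 < x ∧ x < 1 ∧ qf n (-(x ^ 2)) = 0 := by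
  set f : ℝ → ℝ := fun x => qf n (-(x ^ 2)) with hf
  have hcont : ContinuousOn f (Set.Icc 0 1) := by
    apply Continuous.continuousOn
    simp only [hf]
    unfold qf
    continuity
  have hf0 : f 0 = 1 := by
    simp only [hf, qf]
    norm_num
    rw [Finset.sum_eq_single 0]
    · simp
    · intro b _ hb; simp [zero_pow hb]
    · intro h; exact absurd (Finset.mem_range.mpr (Nat.succ_pos _)) h
  have hf1 : f 1 < 0 := by
    have := qf_one_neg n hn
    simpa [hf] using this
  have h01 : (0 : ℝ) ≤ 1 := by norm_num
  have := intermediate_value_Ioo' h01 hcont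
  have hmem : (0 : ℝ) ∈ Set.Ioo (f 1) (f 0) := ⟨hf1, by rw [hf0]; norm_num⟩
  obtain ⟨x, hx, hfx⟩ := this hmem
  exact ⟨x, hx.1, hx.2, hfx⟩
end

section
/- For every odd natural number m ≥ 1, the central binomial coefficient C(2m+1, m) is not a perfect square. (More precisely: for all m ≥ 1, there is no natural number s with s^2 = C(2m+1, m).) -/
theorem central_binomial_not_square (m : ℕ) (hm : 1 ≤ m) :
    ¬ ∃ s : ℕ, s ^ 2 = Nat.choose (2 * m + 1) m := by
  rintro ⟨s, hs⟩
  obtain ⟨p, hp, hlt, hle⟩ := Nat.exists_prime_lt_and_le_two_mul (m + 1) (by omega)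
  have hp2 : p ≤ 2 * m + 1 := by
    rcases lt_or_eq_of_le hle with h | h
    · omega
    · exfalso
      subst h
      exact Nat.not_prime_mul (by omega) (by omega) hp
  have hdvd : p ∣ Nat.choose (2 * m + 1) m :=
    hp.dvd_choose (by omega) (by omega) (by omega)
  have hpos : 0 < Nat.choose (2 * m + 1) m := Nat.choose_pos (by omega)
  have hle1 : (Nat.choose (2 * m + 1) m).factorization p ≤ 1 :=
    Nat.factorization_choose_le_one (by nlinarith)
  have hge1 : 1 ≤ (Nat.choose (2 * m + 1) m).factorization p :=
    (Nat.Prime.factorization_pos_of_dvd hp hpos.ne' hdvd)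
  have heq1 : (Nat.choose (2 * m + 1) m).factorization p = 1 := le_antisymm hle1 hge1
  have hs0 : s ≠ 0 := by
    intro h; subst h; simp at hs; omega
  have : (s ^ 2).factorization p = 2 * s.factorization p := by
    rw [Nat.factorization_pow]; simp [mul_comm]
  rw [hs, heq1] at this
  omega
end
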